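/- Let f_n(x) = 2T_n(x/2 + 1/2) − 1 (the chain of Chebyshev type with a = b = 1/2). Then for positive integers m < n, f_m(x) divides f_n(x) in ℚ[x] if and only if m ∣ n and gcd(n/m, 6) = 1. -/

import Mathlib

open Polynomial Real

-- aux 1: degree bound on T
lemma aux_Tdeg : ∀ k : ℕ, (Polynomial.Chebyshev.T ℚ (k:ℤ)).natDegree ≤ k := by
  intro k
  induction k using Nat.strong_induction_on with
  | _ k ih =>
    match k with
    | 0 => simp [Polynomial.Chebyshev.T_zero]
    | 1 => simpa [Polynomial.Chebyshev.T_one] using natDegree_X_le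
    | (k+2) =>
      have h : ((k+2 : ℕ) : ℤ) = (k:ℤ) + 2 := by push_cast; ring
      rw [h, Polynomial.Chebyshev.T_add_two]
      refine le_trans (natDegree_sub_le _ _) (max_le ?_ ?_)
      · refine le_trans (natDegree_mul_le) ?_
        have h1 : ((k:ℤ) + 1) = ((k+1 : ℕ) : ℤ) := by push_cast; ring
        have h2 := ih (k+1) (by omega)
        rw [h1]
        calc (2 * X : ℚ[X]).natDegree + (Polynomial.Chebyshev.T ℚ ((k+1:ℕ):ℤ)).natDegree
            ≤ 1 + (k+1) := by
              gcongr
              refine le_trans natDegree_mul_le ?_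
              simp
          _ ≤ k + 2 := by omega
      · exact le_trans (ih k (by omega)) (by omega)

-- aux 2: cos value
lemma aux_cos (a : ℕ) (ha : a % 6 = 1 ∨ a % 6 = 5) : Real.cos (a * (π/3)) = 1/2 := by
  rcases ha with h | h
  · obtain ⟨t, rfl⟩ : ∃ t, a = 6*t+1 := ⟨a/6, by omega⟩
    have he : ((6*t+1 : ℕ) : ℝ) * (π/3) = π/3 + (t:ℝ) * (2*π) := by push_cast; ring
    rw [he]
    have h2 := Real.cos_add_int_mul_two_pi (π/3) (t:ℤ)
    push_cast at h2
    rw [h2, Real.cos_pi_div_three]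
  · obtain ⟨t, rfl⟩ : ∃ t, a = 6*t+5 := ⟨a/6, by omega⟩
    have he : ((6*t+5:ℕ):ℝ) * (π/3) = -(π/3) + ((t:ℝ)+1) * (2*π) := by push_cast; ring
    rw [he]
    have h2 := Real.cos_add_int_mul_two_pi (-(π/3)) ((t:ℤ)+1)
    push_cast at h2
    rw [h2, Real.cos_neg, Real.cos_pi_div_three]

-- aux 3: gcd helper
lemma aux_gcd (r : ℕ) (hr : r % 6 = 1 ∨ r % 6 = 5) : Nat.gcd r 6 = 1 := by
  rw [Nat.gcd_comm, Nat.gcd_rec]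
  rcases hr with h | h <;> rw [h] <;> decide

lemma aux_gcd' (r : ℕ) (hr : Nat.gcd r 6 = 1) : r % 6 = 1 ∨ r % 6 = 5 := by
  have h1 : Nat.gcd (r % 6) 6 = 1 := by rw [← Nat.gcd_rec, Nat.gcd_comm]; exact hr
  have h2 : r % 6 < 6 := Nat.mod_lt _ (by norm_num)
  have key : ∀ s < 6, s ≠ 1 → s ≠ 5 → Nat.gcd s 6 ≠ 1 := by decide
  by_contra hc
  push_neg at hc
  exact key _ h2 hc.1 hc.2 h1

-- key evaluation
lemma aux_eval (j : ℕ) (θ : ℝ) :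
    ((C 2 * (Polynomial.Chebyshev.T ℚ (j : ℤ)).comp (C (1/2) * X + C (1/2)) - C 1).map
      (algebraMap ℚ ℝ)).eval (2 * Real.cos θ - 1) = 2 * Real.cos (j * θ) - 1 := by
  simp only [Polynomial.map_sub, Polynomial.map_mul, Polynomial.map_comp, Polynomial.map_add,
    map_C, map_X, Polynomial.Chebyshev.map_T, eval_sub, eval_mul, eval_C, eval_comp,
    eval_add, eval_X]
  have h1 : (algebraMap ℚ ℝ) (1/2) = 1/2 := by norm_num
  have h2 : (algebraMap ℚ ℝ) 2 = 2 := by norm_num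
  have h3 : (algebraMap ℚ ℝ) 1 = 1 := by norm_num
  rw [h1, h2, h3]
  have h4 : (1:ℝ)/2 * (2 * Real.cos θ - 1) + 1/2 = Real.cos θ := by ring
  rw [h4, Polynomial.Chebyshev.T_real_cos]
  push_cast
  ring_nf

-- degree bound
lemma aux_deg (j : ℕ) :
    (C 2 * (Polynomial.Chebyshev.T ℚ (j : ℤ)).comp (C (1/2) * X + C (1/2)) - C 1).natDegree ≤ j := by
  refine le_trans (natDegree_sub_le _ _) (max_le ?_ (by simp))
  refine le_trans natDegree_mul_le ?_
  simp only [natDegree_C, zero_add]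
  refine le_trans natDegree_comp_le ?_
  have h1 : (C (1/2:ℚ) * X + C (1/2)).natDegree ≤ 1 := by
    refine le_trans (natDegree_add_le _ _) (max_le ?_ (by simp))
    refine le_trans natDegree_mul_le (by simp)
  calc (Polynomial.Chebyshev.T ℚ (j:ℤ)).natDegree * (C (1/2:ℚ) * X + C (1/2)).natDegree
      ≤ j * 1 := Nat.mul_le_mul (aux_Tdeg j) h1
    _ = j := by ring

theorem chebyshev_chain_half_dvd_iff (f : ℕ → ℚ[X])
    (hf : ∀ j : ℕ, f j =
      C 2 * (Polynomial.Chebyshev.T ℚ (j : ℤ)).comp (C (1/2) * X + C (1/2)) - C 1)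
    (m n : ℕ) (hm : 0 < m) (hmn : m < n) :
    f m ∣ f n ↔ m ∣ n ∧ Nat.gcd (n / m) 6 = 1 := by
  have hn : 0 < n := lt_trans hm hmn
  have hmR : (m:ℝ) ≠ 0 := Nat.cast_ne_zero.mpr hm.ne'
  have hπ : π ≠ 0 := Real.pi_ne_zero
  have keyEval : ∀ (j : ℕ) (θ : ℝ),
      ((f j).map (algebraMap ℚ ℝ)).eval (2 * Real.cos θ - 1) = 2 * Real.cos (j * θ) - 1 := by
    intro j θ; rw [hf j]; exact aux_eval j θ
  have hFne : ∀ j : ℕ, (f j).map (algebraMap ℚ ℝ) ≠ 0 := by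
    intro j h0
    have h1 := keyEval j 0
    rw [h0] at h1
    norm_num at h1
  constructor
  · rintro h
    have hF : (f m).map (algebraMap ℚ ℝ) ∣ (f n).map (algebraMap ℚ ℝ) :=
      Polynomial.map_dvd _ h
    obtain ⟨c, hc⟩ := hF
    set θ₀ : ℝ := π / (3*m) with hθ₀
    have hm3 : (m:ℝ) * θ₀ = π/3 := by rw [hθ₀]; field_simp
    have h1 : ((f m).map (algebraMap ℚ ℝ)).eval (2 * Real.cos θ₀ - 1) = 0 := by
      rw [keyEval m θ₀, hm3, Real.cos_pi_div_three]; norm_num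
    have h2 : ((f n).map (algebraMap ℚ ℝ)).eval (2 * Real.cos θ₀ - 1) = 0 := by
      rw [hc, eval_mul, h1, zero_mul]
    rw [keyEval n θ₀] at h2
    have hcos : Real.cos ((n:ℝ) * θ₀) = Real.cos (π/3) := by
      rw [Real.cos_pi_div_three]; linarith
    obtain ⟨k, hk⟩ := Real.cos_eq_cos_iff.mp hcos
    have hmpos : (0:ℤ) < m := by exact_mod_cast hm
    have hnpos : (0:ℤ) < n := by exact_mod_cast hn
    rcases hk with hk | hk
    · have hr : (n:ℝ) * π = ((m:ℝ) * (1 - 6*k)) * π := by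
        rw [hθ₀] at hk
        field_simp at hk
        rw [show (n:ℝ) = m*(1-6*k) by linarith]
      have hr2 : (n:ℝ) = (m:ℝ) * (1 - 6*k) := mul_right_cancel₀ hπ hr
      have hz : (n:ℤ) = (m:ℤ) * (1 - 6*k) := by exact_mod_cast hr2
      have hw : (0:ℤ) < 1 - 6*k := by nlinarith [hz]
      have hdvd : n = m * (1-6*k).toNat := by
        have h' : (n:ℤ) = (m:ℤ) * ((1-6*k).toNat:ℤ) := by
          rw [Int.toNat_of_nonneg hw.le]; exact hz
        exact_mod_cast h'
      refine ⟨⟨_, hdvd⟩, ?_⟩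
      have hq : n / m = (1-6*k).toNat := by rw [hdvd, Nat.mul_div_cancel_left _ hm]
      rw [hq]
      exact aux_gcd _ (Or.inl (by omega))
    · have hr : (n:ℝ) * π = ((m:ℝ) * (6*k - 1)) * π := by
        rw [hθ₀] at hk
        field_simp at hk
        rw [show (n:ℝ) = m*(6*k-1) by linarith]
      have hr2 : (n:ℝ) = (m:ℝ) * (6*k - 1) := mul_right_cancel₀ hπ hr
      have hz : (n:ℤ) = (m:ℤ) * (6*k - 1) := by exact_mod_cast hr2
      have hw : (0:ℤ) < 6*k - 1 := by nlinarith [hz]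
      have hdvd : n = m * (6*k-1).toNat := by
        have h' : (n:ℤ) = (m:ℤ) * ((6*k-1).toNat:ℤ) := by
          rw [Int.toNat_of_nonneg hw.le]; exact hz
        exact_mod_cast h'
      refine ⟨⟨_, hdvd⟩, ?_⟩
      have hq : n / m = (6*k-1).toNat := by rw [hdvd, Nat.mul_div_cancel_left _ hm]
      rw [hq]
      exact aux_gcd _ (Or.inr (by omega))
  · rintro ⟨⟨q, hq⟩, hgcd⟩
    have hq' : n / m = q := by rw [hq, Nat.mul_div_cancel_left _ hm]
    rw [hq'] at hgcd
    have h6 : q % 6 = 1 ∨ q % 6 = 5 := aux_gcd' q hgcd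
    set x : ℕ → ℝ := fun i => 2 * Real.cos ((3*i+1+i%2 : ℕ) * π / (3*m)) - 1 with hx
    have hroot : ∀ c : ℕ, (c % 6 = 1 ∨ c % 6 = 5) → ∀ i,
        ((f (m*c)).map (algebraMap ℚ ℝ)).eval (x i) = 0 := by
      intro c hc i
      have hji : (3*i+1+i%2) % 6 = 1 ∨ (3*i+1+i%2) % 6 = 5 := by omega
      have hmod : (c * (3*i+1+i%2)) % 6 = 1 ∨ (c * (3*i+1+i%2)) % 6 = 5 := by
        rw [Nat.mul_mod]
        rcases hc with h|h <;> rcases hji with h'|h' <;> rw [h, h'] <;> norm_num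
      rw [hx]
      simp only
      rw [keyEval (m*c) _]
      have he : ((m*c : ℕ):ℝ) * ((3*i+1+i%2 : ℕ) * π / (3*m)) =
          ((c * (3*i+1+i%2) : ℕ):ℝ) * (π/3) := by
        push_cast
        field_simp
      rw [he, aux_cos _ hmod]
      norm_num
    have hmono : ∀ i₁ i₂, i₁ < i₂ → i₂ < m → x i₂ < x i₁ := by
      intro i₁ i₂ h12 h2m
      have hπpos := Real.pi_pos
      have hθ0 : (0:ℝ) ≤ (3*i₁+1+i₁%2 : ℕ) * π / (3*m) := by positivity
      have hθle : ((3*i₂+1+i₂%2 : ℕ):ℝ) * π / (3*m) ≤ π := by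
        rw [div_le_iff₀ (by positivity)]
        have hb : ((3*i₂+1+i₂%2 : ℕ):ℝ) ≤ 3*m := by
          have : (3*i₂+1+i₂%2 : ℕ) ≤ 3*m := by omega
          exact_mod_cast this
        nlinarith
      have hθlt : ((3*i₁+1+i₁%2 : ℕ):ℝ) * π / (3*m) < ((3*i₂+1+i₂%2 : ℕ):ℝ) * π / (3*m) := by
        have hb : ((3*i₁+1+i₁%2 : ℕ):ℝ) < ((3*i₂+1+i₂%2 : ℕ):ℝ) := by
          have : (3*i₁+1+i₁%2 : ℕ) < (3*i₂+1+i₂%2 : ℕ) := by omega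
          exact_mod_cast this
        gcongr
      have hcc := Real.cos_lt_cos_of_nonneg_of_le_pi hθ0 hθle hθlt
      rw [hx]
      simp only
      push_cast at hcc ⊢
      linarith
    have hinj : ∀ i₁ ∈ (Finset.range m).val, ∀ i₂ ∈ (Finset.range m).val, x i₁ = x i₂ → i₁ = i₂ := by
      intro i₁ h1 i₂ h2 he
      rw [Finset.mem_val, Finset.mem_range] at h1 h2
      rcases lt_trichotomy i₁ i₂ with h|h|h
      · exact absurd he (by have := hmono _ _ h h2; exact ne_of_gt (by linarith))
      · exact h
      · exact absurd he (by have := hmono _ _ h h1; exact ne_of_lt (by linarith))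
    set s : Multiset ℝ := (Finset.range m).val.map x with hs
    have hnodup : s.Nodup := Multiset.Nodup.map_on hinj (Finset.range m).nodup
    have hcard : Multiset.card s = m := by simp [hs]
    have hled : ∀ N : ℕ, (∀ i, ((f N).map (algebraMap ℚ ℝ)).eval (x i) = 0) →
        s ≤ ((f N).map (algebraMap ℚ ℝ)).roots := by
      intro N hN
      refine (Multiset.le_iff_subset hnodup).2 ?_
      intro a ha
      rw [hs] at ha
      obtain ⟨i, _, rfl⟩ := Multiset.mem_map.mp ha
      exact mem_roots'.2 ⟨hFne N, hN i⟩
    have hrootm : ∀ i, ((f m).map (algebraMap ℚ ℝ)).eval (x i) = 0 := by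
      intro i
      have := hroot 1 (by norm_num) i
      rwa [mul_one] at this
    have hrootn : ∀ i, ((f n).map (algebraMap ℚ ℝ)).eval (x i) = 0 := by
      intro i
      have := hroot q h6 i
      rwa [← hq] at this
    have hgFm : (s.map fun a => X - C a).prod ∣ (f m).map (algebraMap ℚ ℝ) :=
      (Multiset.prod_X_sub_C_dvd_iff_le_roots (hFne m) s).2 (hled m hrootm)
    have hgFn : (s.map fun a => X - C a).prod ∣ (f n).map (algebraMap ℚ ℝ) :=
      (Multiset.prod_X_sub_C_dvd_iff_le_roots (hFne n) s).2 (hled n hrootn)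
    set g : ℝ[X] := (s.map fun a => X - C a).prod with hg
    have hgmonic : g.Monic := monic_multiset_prod_of_monic _ _ (fun a _ => monic_X_sub_C a)
    have hgdeg : g.natDegree = m := by
      rw [hg, natDegree_multiset_prod_of_monic _ (fun p hp => by
        obtain ⟨a, _, rfl⟩ := Multiset.mem_map.mp hp; exact monic_X_sub_C a)]
      simp [Multiset.map_map, hcard]
    obtain ⟨c, hc⟩ := hgFm
    have hc0 : c ≠ 0 := by rintro rfl; rw [mul_zero] at hc; exact hFne m hc
    have hdegc : c.natDegree = 0 := by
      have h1 : ((f m).map (algebraMap ℚ ℝ)).natDegree ≤ m := by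
        have h0 := aux_deg m
        rw [← hf m] at h0
        exact le_trans natDegree_map_le h0
      have h2 : (g * c).natDegree = g.natDegree + c.natDegree :=
        natDegree_mul hgmonic.ne_zero hc0
      rw [← hc] at h2
      omega
    obtain ⟨a, ha⟩ : ∃ a, c = C a := ⟨c.coeff 0, Polynomial.eq_C_of_natDegree_eq_zero hdegc⟩
    have ha0 : a ≠ 0 := by rintro rfl; apply hc0; rw [ha, map_zero]
    have hFmdvdg : (f m).map (algebraMap ℚ ℝ) ∣ g := by
      refine ⟨C a⁻¹, ?_⟩
      rw [hc, ha, mul_assoc, ← C_mul, mul_inv_cancel₀ ha0, C_1, mul_one]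
    exact (Polynomial.map_dvd_map' (algebraMap ℚ ℝ)).1 (hFmdvdg.trans hgFn)
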